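/- Let u ∈ BMOA(𝕋) with ‖H_u‖ = s > 0 and E_H(s) = Ker(H_u² - s²I) ≠ {0}. If f ∈ E_H(s) and a is an inner divisor of f (i.e., f = a f₀ with f₀ ∈ H²(𝕋) and a inner), then f₀ ∈ E_H(s) and H_u f₀ = T_a H_u f. -/

import Mathlib

open MeasureTheory Complex Real ComplexConjugate AddCircle

noncomputable section

instance fact2pi : Fact (0 < 2 * π) := ⟨by positivity⟩

abbrev Tc : Type := AddCircle (2 * π)

abbrev haarT : Measure Tc := haarAddCircle

abbrev HL2 : Type := Lp ℂ 2 haarT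

def IsHardy (f : HL2) : Prop := ∀ n : ℤ, n < 0 → fourierCoeff (⇑f) n = 0

def IsHardyFun (u : Tc → ℂ) : Prop := ∀ n : ℤ, n < 0 → fourierCoeff u n = 0

def IsInnerF (θ : Tc → ℂ) : Prop :=
  AEStronglyMeasurable θ haarT ∧ (∀ᵐ x ∂haarT, ‖θ x‖ = 1) ∧ IsHardyFun θ

def IsHankelOp (u : Tc → ℂ) (H : HL2 → HL2) : Prop :=
  MemLp u 2 haarT ∧ IsHardyFun u ∧
  (∃ C : ℝ, ∀ f, ‖H f‖ ≤ C * ‖f‖) ∧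
  (∀ f g, H (f + g) = H f + H g) ∧
  (∀ (c : ℂ) (f : HL2), H (c • f) = conj c • H f) ∧
  (∀ f, IsHardy (H f)) ∧
  (∀ f g : HL2, IsHardy g →
    Integrable (fun x => u x * conj (f x) * conj (g x)) haarT →
    (inner ℂ g (H f) : ℂ) = ∫ x, u x * conj (f x) * conj (g x) ∂haarT)

def IsShiftAdjOf (H K : HL2 → HL2) : Prop :=
  ∀ f, IsHardy (K f) ∧
    ∀ n : ℤ, 0 ≤ n → fourierCoeff (⇑(K f)) n = fourierCoeff (⇑(H f)) (n + 1)

def IsSzego (P : HL2 →L[ℂ] HL2) : Prop :=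
  (∀ f, IsHardy (P f)) ∧ ∀ f g : HL2, IsHardy g → (inner ℂ g (f - P f) : ℂ) = 0

def MemKz (θ : Tc → ℂ) (f : HL2) : Prop :=
  IsHardy f ∧ ∀ h w : HL2, IsHardy h →
    (⇑w =ᵐ[haarT] fun x => fourier 1 x * θ x * h x) → (inner ℂ w f : ℂ) = 0

def MemK (θ : Tc → ℂ) (f : HL2) : Prop :=
  IsHardy f ∧ ∀ h w : HL2, IsHardy h →
    (⇑w =ᵐ[haarT] fun x => θ x * h x) → (inner ℂ w f : ℂ) = 0


lemma fourierCoeff_eq_inner (x : HL2) (n : ℤ) :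
    fourierCoeff (⇑x) n = (inner ℂ (fourierLp 2 n : HL2) x : ℂ) := by
  rw [← fourierBasis_repr, fourierBasis.repr_apply_apply, coe_fourierBasis]

lemma hl2_ext {x y : HL2} (h : ∀ n : ℤ, fourierCoeff (⇑x) n = fourierCoeff (⇑y) n) : x = y := by
  apply fourierBasis.repr.injective
  ext n
  rw [fourierBasis_repr, fourierBasis_repr]
  exact h n

lemma norm_fourier (n : ℤ) (x : Tc) : ‖fourier n x‖ = 1 := by
  rw [fourier_apply]
  exact Circle.norm_coe _

lemma fourierCoeff_congr {f g : Tc → ℂ} (h : f =ᵐ[haarT] g) (n : ℤ) :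
    fourierCoeff f n = fourierCoeff g n := by
  unfold fourierCoeff
  apply integral_congr_ae
  filter_upwards [h] with x hx
  rw [hx]

lemma isHardy_fourierLp {n : ℤ} (hn : 0 ≤ n) : IsHardy (fourierLp 2 n) := by
  intro m hm
  rw [fourierCoeff_eq_inner]
  rw [orthonormal_iff_ite.mp orthonormal_fourier]
  simp only [ite_eq_right_iff]
  intro h
  omega

lemma integrable_mul_L2 (x y : HL2) :
    Integrable (fun t => ‖x t‖ * ‖y t‖) haarT := by
  have := (L2.integrable_inner (𝕜 := ℂ) x y).norm
  apply this.congr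
  filter_upwards with t
  simp [RCLike.inner_apply, norm_mul, mul_comm]

lemma integrable_aux {u : Tc → ℂ} (hu2 : MemLp u 2 haarT) (h : HL2) {b : Tc → ℂ}
    (hb : AEStronglyMeasurable b haarT) (hbd : ∀ᵐ x ∂haarT, ‖b x‖ ≤ 1) :
    Integrable (fun x => u x * conj (h x) * conj (b x)) haarT := by
  have hU := hu2.toLp u
  have hUc : ⇑(hu2.toLp u) =ᵐ[haarT] u := hu2.coeFn_toLp
  have hint := integrable_mul_L2 (hu2.toLp u) h
  have hint' : Integrable (fun t => ‖u t‖ * ‖h t‖) haarT := by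
    apply hint.congr
    filter_upwards [hUc] with t ht
    rw [ht]
  apply hint'.mono'
  · have cconj : Continuous (conj : ℂ → ℂ) := RCLike.continuous_conj
    exact (hu2.aestronglyMeasurable.mul
      (cconj.comp_aestronglyMeasurable (Lp.aestronglyMeasurable h))).mul
      (cconj.comp_aestronglyMeasurable hb)
  · filter_upwards [hbd] with t ht
    have : ‖u t * conj (h t) * conj (b t)‖ = ‖u t‖ * ‖h t‖ * ‖b t‖ := by
      simp [norm_mul]
    rw [this]
    calc ‖u t‖ * ‖h t‖ * ‖b t‖ ≤ ‖u t‖ * ‖h t‖ * 1 := by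
          apply mul_le_mul_of_nonneg_left ht (by positivity)
      _ = ‖u t‖ * ‖h t‖ := mul_one _

lemma memℒp_unit_mul {b : Tc → ℂ} (hb : AEStronglyMeasurable b haarT)
    (hbd : ∀ᵐ x ∂haarT, ‖b x‖ = 1) (x : HL2) :
    MemLp (fun t => b t * x t) 2 haarT := by
  constructor
  · exact hb.mul (Lp.aestronglyMeasurable x)
  · have : eLpNorm (fun t => b t * x t) 2 haarT = eLpNorm (⇑x) 2 haarT := by
      apply eLpNorm_congr_norm_ae
      filter_upwards [hbd] with t ht
      rw [norm_mul, ht, one_mul]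
    rw [this]
    exact Lp.eLpNorm_lt_top x

lemma norm_unit_mul {b : Tc → ℂ} (hbd : ∀ᵐ x ∂haarT, ‖b x‖ = 1) (x w : HL2)
    (hw : ⇑w =ᵐ[haarT] fun t => b t * x t) : ‖w‖ = ‖x‖ := by
  rw [Lp.norm_def, Lp.norm_def]
  congr 1
  rw [eLpNorm_congr_ae hw]
  apply eLpNorm_congr_norm_ae
  filter_upwards [hbd] with t ht
  rw [norm_mul, ht, one_mul]

lemma isHardyFun_mul_fourier {a : Tc → ℂ} (haH : IsHardyFun a) {n : ℤ} (hn : 0 ≤ n) :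
    IsHardyFun (fun x => a x * fourier n x) := by
  intro m hm
  have : fourierCoeff (fun x => a x * fourier n x) m = fourierCoeff a (m - n) := by
    unfold fourierCoeff
    apply integral_congr_ae
    filter_upwards with x
    have hmn : -(m - n) = -m + n := by ring
    have : fourier (-(m - n)) x = fourier (-m) x * fourier n x := by
      rw [hmn, fourier_add]
    simp only [smul_eq_mul] at *
    rw [this]; ring
  rw [this]
  exact haH _ (by omega)

lemma isHardy_sub {x y : HL2} (hx : IsHardy x) (hy : IsHardy y) : IsHardy (x - y) := by
  intro n hn
  rw [fourierCoeff_eq_inner, inner_sub_right, ← fourierCoeff_eq_inner x,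
    ← fourierCoeff_eq_inner y, hx n hn, hy n hn, sub_zero]

lemma szego_fix {P : HL2 →L[ℂ] HL2} (hP : IsSzego P) {x : HL2} (hx : IsHardy x) : P x = x := by
  have h1 : IsHardy (x - P x) := isHardy_sub hx (hP.1 x)
  have h2 := hP.2 x (x - P x) h1
  have : x - P x = 0 := by
    rwa [inner_self_eq_zero] at h2
  rw [eq_comm, ← sub_eq_zero]
  exact this

lemma szego_eq_of_norm_le {P : HL2 →L[ℂ] HL2} (hP : IsSzego P) (v : HL2)
    (hle : ‖v‖ ≤ ‖P v‖) : P v = v := by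
  have horth : (inner ℂ (P v) (v - P v) : ℂ) = 0 := hP.2 v (P v) (hP.1 v)
  have hpyth := norm_add_sq_eq_norm_sq_add_norm_sq_of_inner_eq_zero (P v) (v - P v) horth
  rw [add_sub_cancel] at hpyth
  have h0 : ‖v - P v‖ = 0 := by
    nlinarith [norm_nonneg (v - P v), norm_nonneg (P v), norm_nonneg v]
  rw [eq_comm, ← sub_eq_zero]
  exact norm_eq_zero.mp h0

lemma hankel_intertwine {u : Tc → ℂ} {H : HL2 → HL2} (hH : IsHankelOp u H)
    {P : HL2 →L[ℂ] HL2} (hP : IsSzego P)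
    {a : Tc → ℂ} (ha : IsInnerF a) (h w v : HL2) (hh : IsHardy h)
    (hw : ⇑w =ᵐ[haarT] fun x => a x * h x)
    (hv : ⇑v =ᵐ[haarT] fun x => conj (a x) * (H h) x) :
    H w = P v := by
  obtain ⟨hu2, huH, -, -, -, hHar, hform⟩ := hH
  obtain ⟨haM, haU, haH⟩ := ha
  apply hl2_ext
  intro n
  rcases lt_or_ge n 0 with hn | hn
  · rw [hHar w n hn, (hP.1 v) n hn]
  have hen : ⇑(fourierLp 2 n : HL2) =ᵐ[haarT] fourier n := coeFn_fourierLp 2 n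
  have henH : IsHardy (fourierLp 2 n : HL2) := isHardy_fourierLp hn
  have hgmem : MemLp (fun x => a x * fourier n x) 2 haarT := by
    apply MemLp.of_bound (haM.mul (fourier n).continuous.aestronglyMeasurable) 1
    filter_upwards [haU] with x hx
    show ‖a x * fourier n x‖ ≤ 1
    rw [norm_mul, hx, norm_fourier, one_mul]
  set g : HL2 := hgmem.toLp _ with hg_def
  have hg : ⇑g =ᵐ[haarT] fun x => a x * fourier n x := hgmem.coeFn_toLp
  have hgH : IsHardy g := by
    intro m hm
    rw [fourierCoeff_congr hg m]
    exact isHardyFun_mul_fourier haH hn m hm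
  have I1 : Integrable (fun x => u x * conj (w x) * conj ((fourierLp 2 n : HL2) x)) haarT := by
    apply integrable_aux hu2 w (Lp.aestronglyMeasurable _)
    filter_upwards [hen] with x hx
    rw [hx, norm_fourier]
  have I2 : Integrable (fun x => u x * conj (h x) * conj (g x)) haarT := by
    apply integrable_aux hu2 h (Lp.aestronglyMeasurable g)
    filter_upwards [hg, haU] with x hx hx2
    rw [hx, norm_mul, hx2, norm_fourier, one_mul]
  have key : (inner ℂ (fourierLp 2 n : HL2) (H w) : ℂ) = inner ℂ g (H h) := by
    rw [hform w _ henH I1, hform h g hgH I2]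
    apply integral_congr_ae
    filter_upwards [hw, hen, hg] with x h1 h2 h3
    rw [h1, h2, h3]
    simp only [map_mul]
    ring
  have key2 : (inner ℂ (fourierLp 2 n : HL2) (P v) : ℂ) = inner ℂ g (H h) := by
    have h4 := hP.2 v (fourierLp 2 n) henH
    rw [inner_sub_right, sub_eq_zero] at h4
    rw [← h4, L2.inner_def, L2.inner_def]
    apply integral_congr_ae
    filter_upwards [hv, hen, hg] with x h1 h2 h3
    simp only [RCLike.inner_apply, h1, h2, h3, map_mul]
    ring
  rw [fourierCoeff_eq_inner, fourierCoeff_eq_inner, key, key2]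

lemma unit_mul_conj {z : ℂ} (hz : ‖z‖ = 1) : z * conj z = 1 := by
  rw [Complex.mul_conj]
  norm_cast
  rw [Complex.normSq_eq_norm_sq, hz]
  norm_num

/-- if `s = ‖H_u‖`, `f ∈ E_H(s) = Ker(H_u² - s²I)` and `f = a f₀` with `a`
inner, then `f₀ ∈ E_H(s)` and `H_u f₀ = T_a H_u f`. -/
theorem inner_divisor_stays_in_Schmidt_space
    (u : Tc → ℂ) (H : HL2 → HL2) (hH : IsHankelOp u H)
    (P : HL2 →L[ℂ] HL2) (hP : IsSzego P)
    (s : ℝ) (hs : 0 < s)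
    (hnorm : ∀ f : HL2, ‖H f‖ ≤ s * ‖f‖)
    (f f₀ : HL2) (a : Tc → ℂ) (ha : IsInnerF a) (hf₀ : IsHardy f₀)
    (hfac : ⇑f =ᵐ[haarT] fun x => a x * f₀ x)
    (hfE : H (H f) = ((s : ℂ) ^ 2) • f) (hfne : f ≠ 0) :
    H (H f₀) = ((s : ℂ) ^ 2) • f₀ ∧
    ∀ w : HL2, (⇑w =ᵐ[haarT] fun x => a x * (H f) x) → H f₀ = P w := by
  obtain ⟨haM, haU, haH⟩ := ha
  have cconj : Continuous (conj : ℂ → ℂ) := RCLike.continuous_conj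
  have hconjU : ∀ᵐ x ∂haarT, ‖conj (a x)‖ = 1 := by
    filter_upwards [haU] with x hx
    rwa [RCLike.norm_conj]
  have hHar : ∀ g : HL2, IsHardy (H g) := hH.2.2.2.2.2.1
  -- norms
  have hnf : ‖f‖ = ‖f₀‖ := norm_unit_mul haU f₀ f hfac
  have hns : ‖((s : ℂ) ^ 2)‖ = s ^ 2 := by
    rw [norm_pow, Complex.norm_real, Real.norm_eq_abs, abs_of_pos hs]
  have h1 : s ^ 2 * ‖f‖ = ‖H (H f)‖ := by rw [hfE, norm_smul, hns]
  have h2 : ‖H (H f)‖ ≤ s * ‖H f‖ := hnorm _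
  have h3 : ‖H f‖ ≤ s * ‖f‖ := hnorm f
  have hHfnorm : ‖H f‖ = s * ‖f‖ := by nlinarith [norm_nonneg (H f), norm_nonneg f]
  -- V := conj a * H f₀
  have hVmem : MemLp (fun x => conj (a x) * (H f₀) x) 2 haarT :=
    memℒp_unit_mul (cconj.comp_aestronglyMeasurable haM) hconjU (H f₀)
  set V : HL2 := hVmem.toLp _ with hV_def
  have hV : ⇑V =ᵐ[haarT] fun x => conj (a x) * (H f₀) x := hVmem.coeFn_toLp
  have hHf : H f = P V := hankel_intertwine hH hP ⟨haM, haU, haH⟩ f₀ f V hf₀ hfac hV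
  have hnV : ‖V‖ = ‖H f₀‖ := norm_unit_mul hconjU (H f₀) V hV
  have hPVeq : P V = V := by
    apply szego_eq_of_norm_le hP
    rw [← hHf, hHfnorm, hnV, hnf]
    calc ‖H f₀‖ ≤ s * ‖f₀‖ := hnorm f₀
      _ = s * ‖f₀‖ := rfl
  have hHfae : ⇑(H f) =ᵐ[haarT] fun x => conj (a x) * (H f₀) x := by
    rw [hHf, hPVeq]; exact hV
  have hHf₀ae : ⇑(H f₀) =ᵐ[haarT] fun x => a x * (H f) x := by
    filter_upwards [hHfae, haU] with x h1 h2
    rw [h1, ← mul_assoc, unit_mul_conj h2, one_mul]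
  constructor
  · -- Goal A
    have hv' : ⇑(((s : ℂ) ^ 2) • f₀) =ᵐ[haarT] fun x => conj (a x) * (H (H f)) x := by
      have hsf : ⇑(H (H f)) =ᵐ[haarT] fun x => ((s : ℂ) ^ 2) * f x := by
        rw [hfE]; exact Lp.coeFn_smul _ _
      have h5 : ⇑(((s : ℂ) ^ 2) • f₀) =ᵐ[haarT] fun x => ((s : ℂ) ^ 2) * f₀ x :=
        Lp.coeFn_smul _ _
      filter_upwards [hsf, h5, hfac, haU] with x k1 k2 k3 k4
      rw [k2, k1, k3]
      have k5 : a x * conj (a x) = 1 := unit_mul_conj k4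
      calc ((s : ℂ) ^ 2) * f₀ x = (a x * conj (a x)) * (((s : ℂ) ^ 2) * f₀ x) := by
            rw [k5, one_mul]
        _ = conj (a x) * (((s : ℂ) ^ 2) * (a x * f₀ x)) := by ring
    have := hankel_intertwine hH hP ⟨haM, haU, haH⟩ (H f) (H f₀) (((s : ℂ) ^ 2) • f₀)
      (hHar f) hHf₀ae hv'
    rw [this, P.map_smul, szego_fix hP hf₀]
  · -- Goal B
    intro w hwa
    have hwe : w = H f₀ := Lp.ext (hwa.trans hHf₀ae.symm)
    rw [hwe, szego_fix hP (hHar f₀)]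

end
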